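/- Suppose L₀ is a sequential contraction of L and let α : ℝ. Define the modified Killing quadratic form on a Lie algebra g by Q_α(x) = trace(ad x ∘ ad x) + α · (trace(ad x))². Then the positive and negative ranks of Q_α do not increase under contraction, in the precise form: (a) for every real subspace W of L₀ such that Q_α(x) > 0 for all nonzero x ∈ W, there exists a subspace W' of L with finrank ℝ W' = finrank ℝ W and Q_α(x) > 0 for all nonzero x ∈ W'; and (b) the same statement with '> 0' replaced by '< 0' throughout. (The case α = 0 is the statement for the Killing form itself.) -/

import Mathlib

open Filter Module

/-- `L₀` is a sequential contraction of the real Lie algebra `L`: there is a sequence of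
real-linear equivalences `T p : L ≃ₗ[ℝ] L₀` such that the transported brackets converge to the
bracket of `L₀`. -/
def IsSequentialContraction (L L₀ : Type*) [LieRing L] [LieAlgebra ℝ L]
    [LieRing L₀] [LieAlgebra ℝ L₀] [TopologicalSpace L₀] : Prop :=
  ∃ T : ℕ → (L ≃ₗ[ℝ] L₀), ∀ x y : L₀,
    Tendsto (fun p => T p ⁅(T p).symm x, (T p).symm y⁆) atTop (nhds ⁅x, y⁆)

/-- The modified Killing quadratic form `Q_α(x) = tr(ad x ∘ ad x) + α (tr ad x)²`. -/
noncomputable def modKilling (α : ℝ) {L : Type*} [LieRing L] [LieAlgebra ℝ L] (x : L) : ℝ :=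
  LinearMap.trace ℝ L (LieAlgebra.ad ℝ L x * LieAlgebra.ad ℝ L x) +
    α * (LinearMap.trace ℝ L (LieAlgebra.ad ℝ L x)) ^ 2

noncomputable def modKillingBil (α : ℝ) {g : Type*} [LieRing g] [LieAlgebra ℝ g] (a b : g) : ℝ :=
  LinearMap.trace ℝ g (LieAlgebra.ad ℝ g a * LieAlgebra.ad ℝ g b) +
    α * (LinearMap.trace ℝ g (LieAlgebra.ad ℝ g a)) * (LinearMap.trace ℝ g (LieAlgebra.ad ℝ g b))

/-- scalar form from a pair of matrices -/
noncomputable def qform (α : ℝ) {ι : Type*} [Fintype ι] (A B : Matrix ι ι ℝ) : ℝ :=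
  (∑ k, ∑ l, A k l * B l k) + α * (∑ k, A k k) * (∑ k, B k k)

lemma trace_mul_eq_sum {g : Type*} [AddCommGroup g] [Module ℝ g] [Module.Finite ℝ g]
    {ι : Type*} [Fintype ι] [DecidableEq ι] (b : Basis ι ℝ g) (f f' : Module.End ℝ g) :
    LinearMap.trace ℝ g (f * f') =
      ∑ k, ∑ l, (LinearMap.toMatrix b b f) k l * (LinearMap.toMatrix b b f') l k := by
  rw [LinearMap.trace_eq_matrix_trace ℝ b, LinearMap.toMatrix_mul]
  simp [Matrix.trace, Matrix.diag, Matrix.mul_apply]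

lemma trace_eq_sum {g : Type*} [AddCommGroup g] [Module ℝ g] [Module.Finite ℝ g]
    {ι : Type*} [Fintype ι] [DecidableEq ι] (b : Basis ι ℝ g) (f : Module.End ℝ g) :
    LinearMap.trace ℝ g f = ∑ k, (LinearMap.toMatrix b b f) k k := by
  rw [LinearMap.trace_eq_matrix_trace ℝ b]
  simp [Matrix.trace, Matrix.diag]

lemma modKillingBil_eq_qform {g : Type*} [LieRing g] [LieAlgebra ℝ g] [Module.Finite ℝ g]
    {ι : Type*} [Fintype ι] [DecidableEq ι] (b : Basis ι ℝ g) (α : ℝ) (x y : g) :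
    modKillingBil α x y = qform α (LinearMap.toMatrix b b (LieAlgebra.ad ℝ g x))
      (LinearMap.toMatrix b b (LieAlgebra.ad ℝ g y)) := by
  rw [modKillingBil, qform, trace_mul_eq_sum b, trace_eq_sum b, trace_eq_sum b]

lemma modKillingBil_conj_eq_qform {L L₀ : Type*} [LieRing L] [LieAlgebra ℝ L]
    [LieRing L₀] [LieAlgebra ℝ L₀] [Module.Finite ℝ L₀]
    {ι : Type*} [Fintype ι] [DecidableEq ι] (b : Basis ι ℝ L₀) (α : ℝ)
    (e : L ≃ₗ[ℝ] L₀) (a c : L) :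
    modKillingBil α a c =
      qform α (LinearMap.toMatrix b b (e.conj (LieAlgebra.ad ℝ L a)))
        (LinearMap.toMatrix b b (e.conj (LieAlgebra.ad ℝ L c))) := by
  have hmul : e.conj (LieAlgebra.ad ℝ L a) * e.conj (LieAlgebra.ad ℝ L c) =
      e.conj (LieAlgebra.ad ℝ L a * LieAlgebra.ad ℝ L c) := by
    rw [Module.End.mul_eq_comp, Module.End.mul_eq_comp, ← LinearEquiv.conj_comp]
  rw [qform, ← trace_mul_eq_sum b, ← trace_eq_sum b, ← trace_eq_sum b, hmul,
    LinearMap.trace_conj', LinearMap.trace_conj', LinearMap.trace_conj', modKillingBil]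

lemma modKilling_expand (α : ℝ) {g : Type*} [LieRing g] [LieAlgebra ℝ g] {m : ℕ}
    (v : Fin m → ℝ) (y : Fin m → g) :
    modKilling α (∑ i, v i • y i) = ∑ i, ∑ j, v i * v j * modKillingBil α (y i) (y j) := by
  have had : LieAlgebra.ad ℝ g (∑ i, v i • y i) = ∑ i, v i • LieAlgebra.ad ℝ g (y i) := by
    simp only [map_sum, map_smul]
  set A := fun i => LieAlgebra.ad ℝ g (y i)
  set t := fun i => LinearMap.trace ℝ g (A i)
  have h1 : LinearMap.trace ℝ g (LieAlgebra.ad ℝ g (∑ i, v i • y i) *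
      LieAlgebra.ad ℝ g (∑ i, v i • y i)) = ∑ i, ∑ j, v i * v j *
        LinearMap.trace ℝ g (A i * A j) := by
    rw [had, Finset.sum_mul_sum]
    rw [map_sum]
    refine Finset.sum_congr rfl fun i _ => ?_
    rw [map_sum]
    refine Finset.sum_congr rfl fun j _ => ?_
    rw [smul_mul_assoc, mul_smul_comm, map_smul, map_smul]
    simp [smul_eq_mul]; ring
  have h2 : LinearMap.trace ℝ g (LieAlgebra.ad ℝ g (∑ i, v i • y i)) = ∑ i, v i * t i := by
    rw [had, map_sum]
    simp [t, A, smul_eq_mul]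
  rw [modKilling, h1, h2]
  rw [sq, Finset.sum_mul_sum, Finset.mul_sum]
  rw [← Finset.sum_add_distrib]
  refine Finset.sum_congr rfl fun i _ => ?_
  rw [Finset.mul_sum, ← Finset.sum_add_distrib]
  refine Finset.sum_congr rfl fun j _ => ?_
  rw [modKillingBil]
  ring

/-- quadratic form from a coefficient array -/
def Gq {m : ℕ} (C : Fin m → Fin m → ℝ) (v : Fin m → ℝ) : ℝ :=
  ∑ i, ∑ j, v i * v j * C i j

lemma Gq_smul {m : ℕ} (C : Fin m → Fin m → ℝ) (s : ℝ) (v : Fin m → ℝ) :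
    Gq C (s • v) = s ^ 2 * Gq C v := by
  rw [Gq, Gq, Finset.mul_sum]
  refine Finset.sum_congr rfl fun i _ => ?_
  rw [Finset.mul_sum]
  refine Finset.sum_congr rfl fun j _ => ?_
  simp [smul_eq_mul]; ring

lemma Gq_sub_abs {m : ℕ} (C C' : Fin m → Fin m → ℝ) (v : Fin m → ℝ) :
    |Gq C v - Gq C' v| ≤ ∑ i, ∑ j, |v i| * |v j| * |C i j - C' i j| := by
  have h : Gq C v - Gq C' v = ∑ i, ∑ j, v i * v j * (C i j - C' i j) := by
    rw [Gq, Gq, ← Finset.sum_sub_distrib]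
    refine Finset.sum_congr rfl fun i _ => ?_
    rw [← Finset.sum_sub_distrib]
    exact Finset.sum_congr rfl fun j _ => by ring
  rw [h]
  refine (Finset.abs_sum_le_sum_abs _ _).trans (Finset.sum_le_sum fun i _ => ?_)
  refine (Finset.abs_sum_le_sum_abs _ _).trans (Finset.sum_le_sum fun j _ => ?_)
  rw [abs_mul, abs_mul]

lemma Gq_continuous {m : ℕ} (C : Fin m → Fin m → ℝ) : Continuous (Gq C) := by
  refine continuous_finset_sum _ fun i _ => continuous_finset_sum _ fun j _ => ?_
  exact ((continuous_apply i).mul (continuous_apply j)).mul continuous_const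

lemma qform_tendsto {ι : Type*} [Fintype ι] (α : ℝ) {A B : ℕ → Matrix ι ι ℝ}
    {A' B' : Matrix ι ι ℝ}
    (hA : ∀ i k, Tendsto (fun p => A p i k) atTop (nhds (A' i k)))
    (hB : ∀ i k, Tendsto (fun p => B p i k) atTop (nhds (B' i k))) :
    Tendsto (fun p => qform α (A p) (B p)) atTop (nhds (qform α A' B')) := by
  unfold qform
  exact (tendsto_finset_sum _ fun k _ =>
      tendsto_finset_sum _ fun l _ => (hA k l).mul (hB l k)).add
    ((tendsto_const_nhds.mul (tendsto_finset_sum _ fun k _ => hA k k)).mul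
      (tendsto_finset_sum _ fun k _ => hB k k))

lemma key_lemma {L L₀ : Type*} [LieRing L] [LieAlgebra ℝ L] [LieRing L₀] [LieAlgebra ℝ L₀]
    [Module.Finite ℝ L] [Module.Finite ℝ L₀]
    [TopologicalSpace L₀] [IsTopologicalAddGroup L₀] [ContinuousSMul ℝ L₀] [T2Space L₀]
    (T : ℕ → (L ≃ₗ[ℝ] L₀))
    (hT : ∀ x y : L₀, Tendsto (fun p => T p ⁅(T p).symm x, (T p).symm y⁆) atTop (nhds ⁅x, y⁆))
    (α ε : ℝ) (W : Submodule ℝ L₀) (hW : ∀ x ∈ W, x ≠ 0 → 0 < ε * modKilling α x) :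
    ∃ W' : Submodule ℝ L, finrank ℝ W' = finrank ℝ W ∧
      ∀ x ∈ W', x ≠ 0 → 0 < ε * modKilling α x := by
  classical
  set m := finrank ℝ W with hmdef
  rcases Nat.eq_zero_or_pos m with hm | hm
  · refine ⟨⊥, ?_, ?_⟩
    · rw [finrank_bot]; omega
    · intro x hx hx0
      exact absurd ((Submodule.mem_bot ℝ).mp hx) hx0
  -- bases
  let w : Basis (Fin m) ℝ W := finBasis ℝ W
  let b : Basis (Fin (finrank ℝ L₀)) ℝ L₀ := finBasis ℝ L₀
  -- transported ad matrices
  set Mp : ℕ → L₀ → Matrix (Fin (finrank ℝ L₀)) (Fin (finrank ℝ L₀)) ℝ :=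
    fun p x => LinearMap.toMatrix b b ((T p).conj (LieAlgebra.ad ℝ L ((T p).symm x))) with hMp
  set M' : L₀ → Matrix (Fin (finrank ℝ L₀)) (Fin (finrank ℝ L₀)) ℝ :=
    fun x => LinearMap.toMatrix b b (LieAlgebra.ad ℝ L₀ x) with hM'
  have hMconv : ∀ (x : L₀) i k, Tendsto (fun p => Mp p x i k) atTop (nhds (M' x i k)) := by
    intro x i k
    have hcont : Continuous fun z : L₀ => b.repr z i :=
      LinearMap.continuous_of_finiteDimensional (b.coord i)
    have he : ∀ p, Mp p x i k = b.repr (T p ⁅(T p).symm x, (T p).symm (b k)⁆) i := by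
      intro p
      simp only [hMp, LinearMap.toMatrix_apply, LinearEquiv.conj_apply_apply, LieAlgebra.ad_apply]
    have he' : M' x i k = b.repr ⁅x, b k⁆ i := by
      simp only [hM', LinearMap.toMatrix_apply, LieAlgebra.ad_apply]
    rw [he']
    simp only [he]
    exact (hcont.tendsto _).comp (hT x (b k))
  -- coefficient arrays
  set c : ℕ → Fin m → Fin m → ℝ :=
    fun p i j => ε * qform α (Mp p ((w i : W) : L₀)) (Mp p ((w j : W) : L₀)) with hc
  set c' : Fin m → Fin m → ℝ :=
    fun i j => ε * qform α (M' ((w i : W) : L₀)) (M' ((w j : W) : L₀)) with hc'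
  have hcconv : ∀ i j, Tendsto (fun p => c p i j) atTop (nhds (c' i j)) := fun i j =>
    tendsto_const_nhds.mul (qform_tendsto α (hMconv _) (hMconv _))
  -- the combination map
  set u : (Fin m → ℝ) → L₀ := fun v => ∑ i, v i • ((w i : W) : L₀) with hu
  have hu_mem : ∀ v, u v ∈ W := fun v =>
    Submodule.sum_mem _ fun i _ => Submodule.smul_mem _ _ (w i).2
  have hu_ne : ∀ v : Fin m → ℝ, v ≠ 0 → u v ≠ 0 := by
    intro v hv hv0
    have hli : LinearIndependent ℝ (fun i => ((w i : W) : L₀)) :=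
      w.linearIndependent.map' W.subtype (Submodule.ker_subtype W)
    have := Fintype.linearIndependent_iff.mp hli v hv0
    exact hv (funext this)
  have hGuv : ∀ v : Fin m → ℝ, Gq c' v = ε * modKilling α (u v) := by
    intro v
    rw [hu, modKilling_expand α v, Finset.mul_sum, Gq]
    refine Finset.sum_congr rfl fun i _ => ?_
    rw [Finset.mul_sum]
    refine Finset.sum_congr rfl fun j _ => ?_
    rw [hc', modKillingBil_eq_qform b]
    ring
  -- min on the sphere
  haveI : Nonempty (Fin m) := ⟨⟨0, hm⟩⟩
  have hSne : (Metric.sphere (0 : Fin m → ℝ) 1).Nonempty :=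
    NormedSpace.sphere_nonempty.mpr zero_le_one
  obtain ⟨v₀, hv₀S, hmin⟩ := (isCompact_sphere (0 : Fin m → ℝ) 1).exists_isMinOn hSne
    (Gq_continuous c').continuousOn
  set δ := Gq c' v₀ with hδdef
  have hSpos : ∀ v ∈ Metric.sphere (0 : Fin m → ℝ) 1, 0 < Gq c' v := by
    intro v hv
    have hvne : v ≠ 0 := by
      intro h0
      rw [mem_sphere_zero_iff_norm, h0, norm_zero] at hv
      norm_num at hv
    rw [hGuv]
    exact hW _ (hu_mem v) (hu_ne v hvne)
  have hδ : 0 < δ := hSpos v₀ hv₀S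
  set d := δ / (m ^ 2 + 1) with hddef
  have hd : 0 < d := div_pos hδ (by positivity)
  -- choose p
  have hev : ∀ᶠ p in atTop, ∀ i j, |c p i j - c' i j| < d := by
    rw [eventually_all]
    intro i
    rw [eventually_all]
    intro j
    have := (hcconv i j) (Metric.ball_mem_nhds (c' i j) hd)
    filter_upwards [this] with p hp
    rw [Set.mem_preimage, Metric.mem_ball, Real.dist_eq] at hp
    exact hp
  obtain ⟨p, hp⟩ := hev.exists
  -- the subspace
  refine ⟨W.map ((T p).symm : L₀ →ₗ[ℝ] L), ?_, ?_⟩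
  · rw [LinearEquiv.finrank_map_eq]
  intro x' hx' hx'0
  obtain ⟨x, hxW, hxeq⟩ := hx'
  have hx0 : x ≠ 0 := by
    intro h0
    apply hx'0
    rw [← hxeq, h0, map_zero]
  -- coordinates of x
  set v : Fin m → ℝ := fun i => w.repr ⟨x, hxW⟩ i with hv
  have hxv : x = u v := by
    have h1 : (⟨x, hxW⟩ : W) = ∑ i, v i • w i := (w.sum_repr ⟨x, hxW⟩).symm
    have h2 := congrArg (Subtype.val : W → L₀) h1
    simpa using h2
  have hvne : v ≠ 0 := by
    intro h0
    apply hx0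
    rw [hxv, h0, hu]
    simp
  -- identify ε * modKilling α x' with Gq (c p) v
  have hGp : ε * modKilling α x' = Gq (c p) v := by
    have hx'sum : x' = ∑ i, v i • (T p).symm ((w i : W) : L₀) := by
      rw [← hxeq, hxv, hu, map_sum]
      exact Finset.sum_congr rfl fun i _ => by rw [map_smul]; rfl
    rw [hx'sum, modKilling_expand α v, Finset.mul_sum, Gq]
    refine Finset.sum_congr rfl fun i _ => ?_
    rw [Finset.mul_sum]
    refine Finset.sum_congr rfl fun j _ => ?_
    rw [hc, modKillingBil_conj_eq_qform b α (T p)]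
    ring
  -- positivity via normalization
  rw [hGp]
  have hvnorm : (0 : ℝ) < ‖v‖ := norm_pos_iff.mpr hvne
  set vu : Fin m → ℝ := ‖v‖⁻¹ • v with hvu
  have hvuS : vu ∈ Metric.sphere (0 : Fin m → ℝ) 1 := by
    rw [mem_sphere_zero_iff_norm, hvu, norm_smul, norm_inv, norm_norm]
    field_simp
  have hsplit : v = ‖v‖ • vu := by
    rw [hvu, smul_smul]
    field_simp
    rw [one_smul]
  have hGq_pos : 0 < Gq (c p) vu := by
    have hbound : |Gq (c p) vu - Gq c' vu| ≤ (m : ℝ) ^ 2 * d := by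
      refine (Gq_sub_abs _ _ _).trans ?_
      have hterm : ∀ i j : Fin m, |vu i| * |vu j| * |c p i j - c' i j| ≤ d := by
        intro i j
        have h1 : |vu i| ≤ 1 := by
          have := norm_le_pi_norm vu i
          rw [mem_sphere_zero_iff_norm.mp hvuS] at this
          simpa using this
        have h2 : |vu j| ≤ 1 := by
          have := norm_le_pi_norm vu j
          rw [mem_sphere_zero_iff_norm.mp hvuS] at this
          simpa using this
        have h3 : |vu i| * |vu j| ≤ 1 * 1 :=
          mul_le_mul h1 h2 (abs_nonneg _) zero_le_one
        have h4 : |vu i| * |vu j| * |c p i j - c' i j| ≤ 1 * 1 * d :=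
          mul_le_mul h3 (hp i j).le (abs_nonneg _) (by norm_num)
        simpa using h4
      calc ∑ i, ∑ j, |vu i| * |vu j| * |c p i j - c' i j|
          ≤ ∑ _i : Fin m, ∑ _j : Fin m, d :=
            Finset.sum_le_sum fun i _ => Finset.sum_le_sum fun j _ => hterm i j
        _ = (m : ℝ) ^ 2 * d := by simp [Finset.sum_const]; ring
    have hmd : (m : ℝ) ^ 2 * d < δ := by
      rw [hddef]
      rw [div_eq_inv_mul, ← mul_assoc]
      rw [mul_comm ((m:ℝ)^2) (((m:ℝ)^2+1))⁻¹]
      have : ((m : ℝ) ^ 2 + 1)⁻¹ * (m : ℝ) ^ 2 < 1 := by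
        rw [inv_mul_lt_iff₀ (by positivity)]
        linarith
      calc ((m:ℝ)^2+1)⁻¹ * (m:ℝ)^2 * δ < 1 * δ := by
            exact mul_lt_mul_of_pos_right this hδ
        _ = δ := one_mul δ
    have hge : δ ≤ Gq c' vu := hmin hvuS
    have habs := abs_sub_lt_iff.mp (lt_of_le_of_lt hbound hmd)
    linarith [habs.2]
  rw [hsplit, Gq_smul]
  positivity

/-- Under a sequential contraction, the positive and negative ranks of the modified Killing
form do not increase. -/
theorem modKilling_inertia_of_contraction {L L₀ : Type*} [LieRing L] [LieAlgebra ℝ L] [LieRing L₀] [LieAlgebra ℝ L₀]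
    [Module.Finite ℝ L] [Module.Finite ℝ L₀]
    [TopologicalSpace L₀] [IsTopologicalAddGroup L₀] [ContinuousSMul ℝ L₀] [T2Space L₀]
    (h : IsSequentialContraction L L₀) (α : ℝ) :
    (∀ W : Submodule ℝ L₀, (∀ x ∈ W, x ≠ 0 → 0 < modKilling α x) →
      ∃ W' : Submodule ℝ L, finrank ℝ W' = finrank ℝ W ∧
        ∀ x ∈ W', x ≠ 0 → 0 < modKilling α x) ∧
    (∀ W : Submodule ℝ L₀, (∀ x ∈ W, x ≠ 0 → modKilling α x < 0) →
      ∃ W' : Submodule ℝ L, finrank ℝ W' = finrank ℝ W ∧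
        ∀ x ∈ W', x ≠ 0 → modKilling α x < 0) := by
  obtain ⟨T, hT⟩ := h
  constructor
  · intro W hW
    obtain ⟨W', h1, h2⟩ := key_lemma T hT α 1 W (fun x hx hx0 => by
      have := hW x hx hx0; linarith)
    exact ⟨W', h1, fun x hx hx0 => by have := h2 x hx hx0; linarith⟩
  · intro W hW
    obtain ⟨W', h1, h2⟩ := key_lemma T hT α (-1) W (fun x hx hx0 => by
      have := hW x hx hx0; linarith)
    exact ⟨W', h1, fun x hx hx0 => by have := h2 x hx hx0; linarith⟩
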